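/- Let u₁,…,u_k : ℕ → ℤ, let θ₁,…,θ_k ∈ ℝ, and let P be a real polynomial. Set D = sup_{n ∈ ℕ} |Σ_{i=1}^k θ_i u_i(n) − P(n)|, and assume D < ∞. Let β, η > 0 satisfy β·D < η. Then there exists a set E ⊆ ℕ whose natural density exists and is positive, such that R_{u₁}(E) ∩ ⋯ ∩ R_{u_k}(E) ⊆ {n ∈ ℕ : ‖β·P(n)‖ < η}. -/

import Mathlib

open Filter

/-- Distance from a real number to the nearest integer. -/
noncomputable def distNearestInt (x : ℝ) : ℝ := |x - round x|

/-- A set of naturals is thick if it contains arbitrarily long blocks of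
consecutive integers. -/
def Thick (S : Set ℕ) : Prop := ∀ L : ℕ, ∃ N : ℕ, ∀ j : ℕ, j ≤ L → N + j ∈ S

/-- A set of naturals is syndetic if it has bounded gaps. -/
def Syndetic (S : Set ℕ) : Prop :=
  ∃ G : ℕ, 0 < G ∧ ∀ a : ℕ, ∃ n ∈ S, a ≤ n ∧ n < a + G

/-- A set is piecewise syndetic if it is the intersection of a thick set and a
syndetic set. -/
def PiecewiseSyndetic (S : Set ℕ) : Prop :=
  ∃ T B : Set ℕ, Thick T ∧ Syndetic B ∧ S = T ∩ B

open Classical in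
/-- The number of elements of `E ∩ {1, …, N}`. -/
noncomputable def countIn (E : Set ℕ) (N : ℕ) : ℕ :=
  ((Finset.Icc 1 N).filter (fun n => n ∈ E)).card

/-- `E` has a natural density that exists and is positive. -/
def PosDensity (E : Set ℕ) : Prop :=
  ∃ d : ℝ, 0 < d ∧
    Tendsto (fun N : ℕ => (countIn E N : ℝ) / (N : ℝ)) atTop (nhds d)

/-- The return-time set `R_u(E) = {n : ∃ m ∈ E, m + u n ∈ E}`. -/
def retSet (u : ℕ → ℤ) (E : Set ℕ) : Set ℕ :=
  {n : ℕ | ∃ m m' : ℕ, m ∈ E ∧ m' ∈ E ∧ (m' : ℤ) = (m : ℤ) + u n}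

/-- The return-time set along the floor of a real-valued function. -/
noncomputable def retSetFloor (f : ℝ → ℝ) (E : Set ℕ) : Set ℕ :=
  retSet (fun n => ⌊f (n : ℝ)⌋) E

/-- The return-time set along the closest integer to a real-valued function. -/
noncomputable def retSetRound (f : ℝ → ℝ) (E : Set ℕ) : Set ℕ :=
  retSet (fun n => round (f (n : ℝ))) E

/-! ### Auxiliary lemmas about `distNearestInt` -/

lemma dni_le (x : ℝ) (z : ℤ) : distNearestInt x ≤ |x - z| := by
  unfold distNearestInt
  rcases eq_or_ne z (round x) with h | h
  · rw [h]
  · have h1 : |x - round x| ≤ 1/2 := abs_sub_round x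
    have h2 : (1:ℝ) ≤ |(z:ℝ) - (round x : ℝ)| := by
      have hz : z - round x ≠ 0 := sub_ne_zero.mpr h
      have := Int.one_le_abs hz
      calc (1:ℝ) ≤ |((z - round x : ℤ) : ℝ)| := by exact_mod_cast this
        _ = |(z:ℝ) - (round x : ℝ)| := by push_cast; ring_nf
    have h3 : |(z:ℝ) - (round x:ℝ)| ≤ |(z:ℝ) - x| + |x - (round x:ℝ)| := abs_sub_le _ _ _
    have h4 : |(z:ℝ) - x| = |x - z| := abs_sub_comm _ _
    linarith

lemma dni_nonneg (x : ℝ) : 0 ≤ distNearestInt x := abs_nonneg _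

lemma dni_zero : distNearestInt 0 = 0 := by simp [distNearestInt]

lemma dni_add (x y : ℝ) : distNearestInt (x + y) ≤ distNearestInt x + distNearestInt y := by
  calc distNearestInt (x + y) ≤ |x + y - (round x + round y : ℤ)| := dni_le _ _
    _ ≤ |x - round x| + |y - round y| := by
        push_cast
        rw [show x + y - ((round x:ℝ) + round y) = (x - round x) + (y - round y) by ring]
        exact abs_add_le _ _
    _ = _ := rfl

lemma dni_sub (x y : ℝ) : distNearestInt (x - y) ≤ distNearestInt x + distNearestInt y := by
  calc distNearestInt (x - y) ≤ |x - y - (round x - round y : ℤ)| := dni_le _ _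
    _ ≤ |x - round x| + |y - round y| := by
        push_cast
        rw [show x - y - ((round x:ℝ) - round y) = (x - round x) - (y - round y) by ring]
        exact abs_sub _ _
    _ = _ := rfl

lemma dni_le_abs (x : ℝ) : distNearestInt x ≤ |x| := by simpa using dni_le x 0

lemma dni_fract (x y : ℝ) : distNearestInt (x - y) ≤ |Int.fract x - Int.fract y| := by
  calc distNearestInt (x - y) ≤ |x - y - (⌊x⌋ - ⌊y⌋ : ℤ)| := dni_le _ _
    _ = |Int.fract x - Int.fract y| := by unfold Int.fract; push_cast; ring_nf

lemma dni_sum {k : ℕ} (f : Fin k → ℝ) :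
    distNearestInt (∑ i, f i) ≤ ∑ i, distNearestInt (f i) := by
  induction k with
  | zero => simp [dni_zero]
  | succ n ih =>
    rw [Fin.sum_univ_succ, Fin.sum_univ_succ]
    exact le_trans (dni_add _ _) (by gcongr; exact ih _)

/-! ### Pigeonhole: arbitrarily large simultaneous returns -/

lemma exists_large_good {k : ℕ} (α : Fin k → ℝ) {δ : ℝ} (hδ : 0 < δ) (M : ℕ) :
    ∃ d : ℕ, M ≤ d ∧ ∀ i, distNearestInt (α i * d) < δ := by
  set m : ℕ := ⌈1/δ⌉₊ with hm
  have hm1 : 1 ≤ m := Nat.one_le_ceil_iff.mpr (by positivity)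
  have hm0 : (0:ℝ) < m := by exact_mod_cast hm1
  have hmδ : 1/(m:ℝ) ≤ δ := by
    have h := Nat.le_ceil (1/δ)
    rw [← hm, div_le_iff₀ hδ] at h
    rw [div_le_iff₀ hm0]
    nlinarith
  have hbox : ∀ (j : ℕ) (i : Fin k), ⌊Int.fract (α i * (j*M : ℕ)) * m⌋₊ < m := by
    intro j i
    have h1 : Int.fract (α i * (j*M : ℕ)) < 1 := Int.fract_lt_one _
    have h0 : (0:ℝ) ≤ Int.fract (α i * (j*M : ℕ)) := Int.fract_nonneg _
    rw [Nat.floor_lt (mul_nonneg h0 hm0.le)]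
    calc Int.fract (α i * (j*M : ℕ)) * m < 1 * m := mul_lt_mul_of_pos_right h1 hm0
      _ = m := one_mul _
  set f : ℕ → (Fin k → Fin m) := fun j i => ⟨⌊Int.fract (α i * (j*M : ℕ)) * m⌋₊, hbox j i⟩ with hf
  have key : ∀ j₁ j₂ : ℕ, j₁ < j₂ → f j₁ = f j₂ →
      ∀ i, distNearestInt (α i * ((j₂ - j₁) * M : ℕ)) < δ := by
    intro j₁ j₂ hlt heq i
    have hc : (((j₂ - j₁) * M : ℕ) : ℝ) = ((j₂*M : ℕ) : ℝ) - ((j₁*M : ℕ):ℝ) := by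
      have := Nat.mul_le_mul_right M hlt.le
      push_cast [Nat.sub_mul, Nat.cast_sub this]
      ring
    have heqi : ⌊Int.fract (α i * (j₁*M : ℕ)) * m⌋₊ = ⌊Int.fract (α i * (j₂*M : ℕ)) * m⌋₊ := by
      have := congrFun heq i
      simpa [hf, Fin.ext_iff] using this
    set x := α i * (j₂*M : ℕ) with hx
    set y := α i * (j₁*M : ℕ) with hy
    have h1 : α i * ((j₂ - j₁) * M : ℕ) = x - y := by rw [hx, hy, hc]; ring
    rw [h1]
    refine lt_of_le_of_lt (dni_fract x y) (lt_of_lt_of_le ?_ hmδ)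
    have hy0 : (0:ℝ) ≤ Int.fract y := Int.fract_nonneg _
    have hx0 : (0:ℝ) ≤ Int.fract x := Int.fract_nonneg _
    have hc2 : (⌊Int.fract y * m⌋₊ : ℝ) ≤ Int.fract y * m := Nat.floor_le (mul_nonneg hy0 hm0.le)
    have hc3 : Int.fract y * m < ⌊Int.fract y * m⌋₊ + 1 := Nat.lt_floor_add_one _
    have hc4 : (⌊Int.fract x * m⌋₊ : ℝ) ≤ Int.fract x * m := Nat.floor_le (mul_nonneg hx0 hm0.le)
    have hc5 : Int.fract x * m < ⌊Int.fract x * m⌋₊ + 1 := Nat.lt_floor_add_one _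
    have heqr : ((⌊Int.fract y * m⌋₊ : ℕ) : ℝ) = ((⌊Int.fract x * m⌋₊ : ℕ) : ℝ) := by rw [heqi]
    rw [abs_sub_lt_iff]
    constructor <;> (rw [lt_div_iff₀ hm0]; nlinarith)
  obtain ⟨j₁, _, j₂, _, hne, heq⟩ :=
    Finset.exists_ne_map_eq_of_card_lt_of_maps_to
      (show (Finset.range (m^k + 1)).card > Fintype.card (Fin k → Fin m) by
        simp [Fintype.card_fun]) (fun j _ => Finset.mem_univ (f j))
  rcases hne.lt_or_gt with hlt | hlt
  · exact ⟨(j₂ - j₁) * M, Nat.le_mul_of_pos_left M (by omega), key j₁ j₂ hlt heq⟩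
  · exact ⟨(j₁ - j₂) * M, Nat.le_mul_of_pos_left M (by omega), key j₂ j₁ hlt heq.symm⟩

/-! ### A finite net for the orbit of fractional parts -/

lemma exists_net {k : ℕ} (α : Fin k → ℝ) {ε : ℝ} (hε : 0 < ε) :
    ∃ F : Finset ℕ, ∀ a : ℕ, ∃ s ∈ F, ∀ i, |Int.fract (α i * a) - Int.fract (α i * s)| < ε := by
  classical
  set w : ℕ → (Fin k → ℝ) := fun a i => Int.fract (α i * a) with hw
  have hsub : Set.range w ⊆ Set.pi Set.univ (fun _ : Fin k => Set.Icc (0:ℝ) 1) := by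
    rintro _ ⟨a, rfl⟩ i _
    exact ⟨Int.fract_nonneg _, (Int.fract_lt_one _).le⟩
  have htb : TotallyBounded (Set.range w) :=
    (isCompact_univ_pi fun _ => isCompact_Icc).totallyBounded.subset hsub
  obtain ⟨t, hts, htf, hcov⟩ := Metric.finite_approx_of_totallyBounded htb ε hε
  have hchoice : ∀ y ∈ t, ∃ s : ℕ, w s = y := fun y hy => hts hy
  set g : (Fin k → ℝ) → ℕ := fun y => if h : ∃ s : ℕ, w s = y then h.choose else 0 with hg
  refine ⟨htf.toFinset.image g, fun a => ?_⟩
  have hmem := hcov (Set.mem_range_self (f := w) a)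
  simp only [Set.mem_iUnion] at hmem
  obtain ⟨y, hy, hball⟩ := hmem
  refine ⟨g y, Finset.mem_image_of_mem g (htf.mem_toFinset.mpr hy), fun i => ?_⟩
  have hgy : w (g y) = y := by
    rw [hg]; dsimp only
    rw [dif_pos (hchoice y hy)]
    exact (hchoice y hy).choose_spec
  have hdist : dist (w a) y < ε := Metric.mem_ball.mp hball
  rw [← hgy] at hdist
  have h2 : dist (w a i) (w (g y) i) < ε :=
    lt_of_le_of_lt (dist_le_pi_dist (w a) (w (g y)) i) hdist
  rwa [Real.dist_eq] at h2

/-! ### Bohr sets are syndetic -/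

lemma syndetic_bohr {k : ℕ} (α : Fin k → ℝ) {ε : ℝ} (hε : 0 < ε) :
    ∃ G : ℕ, ∀ a : ℕ, ∃ j ≤ G, ∀ i, distNearestInt (α i * ((a + j : ℕ) : ℝ)) < ε := by
  classical
  obtain ⟨F, hF⟩ := exists_net α (half_pos hε)
  set d : ℕ → ℕ := fun s => (exists_large_good α (half_pos hε) s).choose with hd
  have hd1 : ∀ s, s ≤ d s := fun s => (exists_large_good α (half_pos hε) s).choose_spec.1
  have hd2 : ∀ s i, distNearestInt (α i * (d s : ℝ)) < ε/2 :=
    fun s => (exists_large_good α (half_pos hε) s).choose_spec.2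
  refine ⟨F.sup d, fun a => ?_⟩
  obtain ⟨s, hsF, hs⟩ := hF a
  refine ⟨d s - s, le_trans (Nat.sub_le _ _) (Finset.le_sup hsF), fun i => ?_⟩
  have hcast : ((a + (d s - s) : ℕ) : ℝ) = (a : ℝ) - (s : ℝ) + (d s : ℝ) := by
    have := hd1 s
    push_cast [Nat.cast_sub this]
    ring
  rw [hcast, mul_add]
  calc distNearestInt (α i * ((a:ℝ) - s) + α i * d s)
      ≤ distNearestInt (α i * ((a:ℝ) - s)) + distNearestInt (α i * d s) := dni_add _ _
    _ < ε/2 + ε/2 := by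
        apply add_lt_add _ (hd2 s i)
        have h1 : α i * ((a:ℝ) - s) = α i * a - α i * s := by ring
        rw [h1]
        exact lt_of_le_of_lt (dni_fract _ _) (hs i)
    _ = ε := add_halves ε

/-! ### The density of the selected set -/

lemma density_range {G1 : ℕ} (hG1 : 1 ≤ G1) (e : ℕ → ℕ)
    (he1 : ∀ t, t * G1 ≤ e t) (he2 : ∀ t, e t < (t+1) * G1) :
    Tendsto (fun N : ℕ => (countIn (Set.range e) N : ℝ) / N) atTop (nhds (1/(G1:ℝ))) := by
  classical
  have hinj : Function.Injective e := by
    have hsm : StrictMono e := strictMono_nat_of_lt_succ (fun t =>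
      lt_of_lt_of_le (he2 t) (he1 (t+1)))
    exact hsm.injective
  have hcount : ∀ N : ℕ, countIn (Set.range e) N =
      ((Finset.range (N+1)).filter fun t => 1 ≤ e t ∧ e t ≤ N).card := by
    intro N
    rw [countIn]
    rw [show (Finset.Icc 1 N).filter (fun n => n ∈ Set.range e)
        = ((Finset.range (N+1)).filter fun t => 1 ≤ e t ∧ e t ≤ N).image e from ?_]
    · rw [Finset.card_image_of_injective _ hinj]
    · ext n
      simp only [Finset.mem_filter, Finset.mem_Icc, Finset.mem_image, Finset.mem_range,
        Set.mem_range]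
      constructor
      · rintro ⟨⟨h1, h2⟩, t, rfl⟩
        exact ⟨t, ⟨by
          have : t ≤ t * G1 := Nat.le_mul_of_pos_right t (by omega)
          have := he1 t; omega, h1, h2⟩, rfl⟩
      · rintro ⟨t, ⟨_, h1, h2⟩, rfl⟩
        exact ⟨⟨h1, h2⟩, t, rfl⟩
  have hub : ∀ N : ℕ, countIn (Set.range e) N ≤ N / G1 + 1 := by
    intro N
    rw [hcount]
    calc ((Finset.range (N+1)).filter fun t => 1 ≤ e t ∧ e t ≤ N).card
        ≤ (Finset.range (N / G1 + 1)).card := by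
          apply Finset.card_le_card
          intro t ht
          simp only [Finset.mem_filter, Finset.mem_range] at ht ⊢
          have h1 := he1 t
          have := Nat.le_div_iff_mul_le (by omega : 0 < G1) |>.mpr
            (le_trans h1 ht.2.2)
          omega
      _ = N / G1 + 1 := Finset.card_range _
  have hlb : ∀ N : ℕ, (N+1) / G1 - 1 ≤ countIn (Set.range e) N := by
    intro N
    rw [hcount]
    calc (N+1) / G1 - 1 = (Finset.Icc 1 ((N+1)/G1 - 1)).card := by
          rw [Nat.card_Icc]; omega
      _ ≤ _ := by
          apply Finset.card_le_card
          intro t ht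
          simp only [Finset.mem_Icc] at ht
          simp only [Finset.mem_filter, Finset.mem_range]
          obtain ⟨ht1, ht2⟩ := ht
          have hq : (N+1)/G1 * G1 ≤ N+1 := Nat.div_mul_le_self _ _
          have hdle : (N+1)/G1 ≤ N+1 := Nat.div_le_self _ _
          have h2 := he2 t
          have h1 := he1 t
          have htG : (t+1) * G1 ≤ (N+1)/G1 * G1 := by
            apply Nat.mul_le_mul_right
            omega
          have h1' : 1 ≤ t * G1 := by
            have : 1 * 1 ≤ t * G1 := Nat.mul_le_mul ht1 hG1
            omega
          refine ⟨by omega, by omega, by omega⟩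
  have htend0 : Tendsto (fun N : ℕ => (2:ℝ) / N) atTop (nhds 0) :=
    tendsto_const_div_atTop_nhds_zero_nat 2
  have hG1R : (0:ℝ) < (G1:ℝ) := by exact_mod_cast hG1
  have hlow : Tendsto (fun N : ℕ => 1/(G1:ℝ) - 2/N) atTop (nhds (1/(G1:ℝ))) := by
    simpa using tendsto_const_nhds.sub htend0
  have hhigh : Tendsto (fun N : ℕ => 1/(G1:ℝ) + 2/N) atTop (nhds (1/(G1:ℝ))) := by
    simpa using tendsto_const_nhds.add htend0
  apply tendsto_of_tendsto_of_tendsto_of_le_of_le' hlow hhigh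
  · filter_upwards [eventually_ge_atTop 1] with N hN
    have hNR : (0:ℝ) < N := by exact_mod_cast hN
    have h1 : (N+1) / G1 - 1 ≤ countIn (Set.range e) N := hlb N
    have h1' : (N+1) / G1 ≤ countIn (Set.range e) N + 1 := by omega
    have h1R : (((N+1)/G1 : ℕ) : ℝ) ≤ (countIn (Set.range e) N : ℝ) + 1 := by
      exact_mod_cast h1'
    have h2 : ((N:ℝ) + 1) / (G1:ℝ) - 1 < (((N+1)/G1 : ℕ) : ℝ) := by
      have h := Nat.lt_div_mul_add (a := N+1) (b := G1) (by omega)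
      have hR : ((N:ℝ) + 1) < (((N+1)/G1 : ℕ) : ℝ) * G1 + G1 := by exact_mod_cast h
      rw [div_sub' (ne_of_gt hG1R), div_lt_iff₀ hG1R]
      nlinarith
    rw [sub_le_iff_le_add, div_add' _ _ _ (ne_of_gt hNR), div_le_div_iff₀ hG1R hNR]
    have hmul : (2:ℝ)/N*N = 2 := div_mul_cancel₀ _ (ne_of_gt hNR)
    have hc : (N:ℝ)/(G1:ℝ) - 2 ≤ (countIn (Set.range e) N : ℝ) := by
      have hmono : (N:ℝ)/(G1:ℝ) ≤ ((N:ℝ)+1)/(G1:ℝ) := by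
        gcongr
        linarith
      linarith
    have hcan : (N:ℝ)/(G1:ℝ) * G1 = N := div_mul_cancel₀ _ (ne_of_gt hG1R)
    nlinarith [hc, hcan, hG1R, hmul]
  · filter_upwards [eventually_ge_atTop 1] with N hN
    have hNR : (0:ℝ) < N := by exact_mod_cast hN
    have h1 : countIn (Set.range e) N ≤ N / G1 + 1 := hub N
    have h1R : (countIn (Set.range e) N : ℝ) ≤ ((N/G1 : ℕ) : ℝ) + 1 := by exact_mod_cast h1
    have h2 : ((N/G1 : ℕ) : ℝ) ≤ (N:ℝ) / (G1:ℝ) := Nat.cast_div_le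
    have hmul : (2:ℝ)/N*N = 2 := div_mul_cancel₀ _ (ne_of_gt hNR)
    rw [div_le_iff₀ hNR, add_mul, hmul]
    have h3 : 1/(G1:ℝ)*N = (N:ℝ)/G1 := by ring
    linarith

/-- Lemma 2.2 (Bohr-set reduction). -/
theorem stmt_7 (k : ℕ) (u : Fin k → ℕ → ℤ) (θ : Fin k → ℝ) (P : Polynomial ℝ)
    (D : ℝ) (hD : ∀ n : ℕ, |(∑ i, θ i * (u i n : ℝ)) - P.eval (n : ℝ)| ≤ D)
    (β η : ℝ) (hβ : 0 < β) (hη : 0 < η) (hβD : β * D < η) :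
    ∃ E : Set ℕ, PosDensity E ∧
      (⋂ i, retSet (u i) E) ⊆
        {n : ℕ | distNearestInt (β * P.eval (n : ℝ)) < η} := by
  classical
  have hD0 : 0 ≤ D := le_trans (abs_nonneg _) (hD 0)
  set ε : ℝ := (η - β*D)/(2*k+2) with hεdef
  have hβDpos : 0 < η - β*D := by linarith
  have hεpos : 0 < ε := by
    apply div_pos hβDpos
    positivity
  set α : Fin k → ℝ := fun i => β * θ i with hα
  obtain ⟨G, hG⟩ := syndetic_bohr α hεpos
  set G1 : ℕ := G + 1 with hG1def
  have hex : ∀ t : ℕ, ∃ j, j ≤ G ∧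
      ∀ i, distNearestInt (α i * ((t*G1 + j : ℕ) : ℝ)) < ε := by
    intro t
    obtain ⟨j, hj, h⟩ := hG (t*G1)
    exact ⟨j, hj, h⟩
  set e : ℕ → ℕ := fun t => t*G1 + (hex t).choose with he
  have he1 : ∀ t, t * G1 ≤ e t := fun t => Nat.le_add_right _ _
  have he2 : ∀ t, e t < (t+1) * G1 := by
    intro t
    have := (hex t).choose_spec.1
    simp only [he]
    have : (hex t).choose < G1 := by omega
    calc t*G1 + (hex t).choose < t*G1 + G1 := by omega
      _ = (t+1)*G1 := by ring
  have heB : ∀ t i, distNearestInt (α i * ((e t : ℕ) : ℝ)) < ε :=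
    fun t => (hex t).choose_spec.2
  refine ⟨Set.range e, ⟨1/(G1:ℝ), by positivity,
    density_range (by omega) e he1 he2⟩, ?_⟩
  intro n hn
  simp only [Set.mem_iInter] at hn
  have hkey : ∀ i, distNearestInt (α i * (u i n : ℝ)) < 2*ε := by
    intro i
    obtain ⟨m, m', hm, hm', heq⟩ := hn i
    obtain ⟨t, rfl⟩ := hm
    obtain ⟨t', rfl⟩ := hm'
    have hcast : ((u i n : ℤ) : ℝ) = ((e t' : ℕ) : ℝ) - ((e t : ℕ) : ℝ) := by
      have : ((e t' : ℕ) : ℝ) = ((e t : ℕ) : ℝ) + ((u i n : ℤ) : ℝ) := by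
        exact_mod_cast congrArg (fun z : ℤ => (z : ℝ)) heq
      linarith
    rw [hcast, mul_sub]
    calc distNearestInt (α i * (e t' : ℕ) - α i * (e t : ℕ))
        ≤ distNearestInt (α i * (e t' : ℕ)) + distNearestInt (α i * (e t : ℕ)) := dni_sub _ _
      _ < ε + ε := add_lt_add (heB t' i) (heB t i)
      _ = 2*ε := by ring
  have hsum : distNearestInt (β * ∑ i, θ i * (u i n : ℝ)) ≤ 2*k*ε := by
    rw [Finset.mul_sum]
    calc distNearestInt (∑ i, β * (θ i * (u i n : ℝ)))
        ≤ ∑ i, distNearestInt (β * (θ i * (u i n : ℝ))) := dni_sum _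
      _ ≤ ∑ _i : Fin k, 2*ε := by
          apply Finset.sum_le_sum
          intro i _
          have h1 : β * (θ i * (u i n : ℝ)) = α i * (u i n : ℝ) := by rw [hα]; ring
          rw [h1]
          exact (hkey i).le
      _ = 2*k*ε := by
          rw [Finset.sum_const, Finset.card_univ, Fintype.card_fin, nsmul_eq_mul]
          ring
  show distNearestInt (β * P.eval (n:ℝ)) < η
  have hsplit : β * P.eval (n:ℝ) = (β * ∑ i, θ i * (u i n : ℝ)) +
      (β * P.eval (n:ℝ) - β * ∑ i, θ i * (u i n : ℝ)) := by ring
  have habs : |β * P.eval (n:ℝ) - β * ∑ i, θ i * (u i n : ℝ)| ≤ β * D := by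
    have h1 : β * P.eval (n:ℝ) - β * ∑ i, θ i * (u i n : ℝ)
        = -(β * ((∑ i, θ i * (u i n : ℝ)) - P.eval (n:ℝ))) := by ring
    rw [h1, abs_neg, abs_mul, abs_of_pos hβ]
    exact mul_le_mul_of_nonneg_left (hD n) hβ.le
  calc distNearestInt (β * P.eval (n:ℝ))
      ≤ distNearestInt (β * ∑ i, θ i * (u i n : ℝ)) +
        distNearestInt (β * P.eval (n:ℝ) - β * ∑ i, θ i * (u i n : ℝ)) := by
        conv_lhs => rw [hsplit]
        exact dni_add _ _
    _ ≤ 2*k*ε + (β * D) := by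
        apply add_le_add hsum (le_trans (dni_le_abs _) habs)
    _ < η := by
        have hkk : (2*(k:ℝ))*ε < (2*k+2)*ε := by
          apply mul_lt_mul_of_pos_right _ hεpos
          linarith
        have heq2 : (2*(k:ℝ)+2)*ε = η - β*D := by
          rw [hεdef]
          field_simp
        nlinarith
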